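/- Let U be an N×N unitary matrix and let χ ∈ ℂ^N be a unit vector with Uχ = e^{iτ}χ for some τ ∈ ℝ. Then for every L ∈ ℕ, ω ∈ ℝ, θ, φ ∈ ℝ^{L+1} and b ∈ {0,1}, the QPP circuit satisfies V^L_{ω,θ,φ}(U)(e_b ⊗ χ) = (e^{−iτ/2})^{L mod 2} · Σ_{b'∈{0,1}} (W^L_{ω,θ,φ}(τ))_{b'b} · (e_{b'} ⊗ χ); that is, each two-dimensional subspace span{e_0 ⊗ χ, e_1 ⊗ χ} attached to an eigenvector χ of U is invariant under V^L(U), on which V^L(U) acts as the 2×2 matrix (e^{−iτ/2})^{L mod 2}·W^L_{ω,θ,φ}(τ). -/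
import Mathlib


open scoped Matrix
set_option maxHeartbeats 1000000

/-- `R_z(φ) = diag(e^{-iφ/2}, e^{iφ/2})`. -/
noncomputable def Rz (φ : ℝ) : Matrix (Fin 2) (Fin 2) ℂ :=
  !![Complex.exp (-(Complex.I * φ / 2)), 0; 0, Complex.exp (Complex.I * φ / 2)]

/-- `R_y(θ)`, the real rotation by angle `θ/2`, viewed as a complex matrix. -/
noncomputable def Ry (θ : ℝ) : Matrix (Fin 2) (Fin 2) ℂ :=
  !![(Real.cos (θ / 2) : ℂ), -(Real.sin (θ / 2) : ℂ);
     (Real.sin (θ / 2) : ℂ), (Real.cos (θ / 2) : ℂ)]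

/-- The trigonometric QSP unitary
`W^L_{ω,θ,φ}(x) = R_z(ω) R_y(θ_0) R_z(φ_0) ∏_{l=1}^{L} [R_z(x) R_y(θ_l) R_z(φ_l)]`,
multiplied left to right in increasing `l`. -/
noncomputable def Wqsp (L : ℕ) (ω : ℝ) (θ φ : ℕ → ℝ) (x : ℝ) :
    Matrix (Fin 2) (Fin 2) ℂ :=
  Rz ω * Ry (θ 0) * Rz (φ 0) *
    ((List.range L).map (fun l => Rz x * Ry (θ (l + 1)) * Rz (φ (l + 1)))).prod

open scoped Kronecker

/-- Block-diagonal matrix `B(X,Y)` with upper-left block `X` and lower-right block `Y`,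
as a matrix on `ℂ² ⊗ ℂⁿ`. -/
noncomputable def blockDiag2 {n : Type*} [Fintype n] [DecidableEq n]
    (X Y : Matrix n n ℂ) : Matrix (Fin 2 × n) (Fin 2 × n) ℂ :=
  (!![1, 0; 0, 0] : Matrix (Fin 2) (Fin 2) ℂ) ⊗ₖ X +
    (!![0, 0; 0, 1] : Matrix (Fin 2) (Fin 2) ℂ) ⊗ₖ Y

/-- The QPP circuit for an even number `2·halfL` of layers. -/
noncomputable def qppEven {n : Type*} [Fintype n] [DecidableEq n]
    (U : Matrix n n ℂ) (halfL : ℕ) (ω : ℝ) (θ φ : ℕ → ℝ) :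
    Matrix (Fin 2 × n) (Fin 2 × n) ℂ :=
  ((Rz ω * Ry (θ 0) * Rz (φ 0)) ⊗ₖ (1 : Matrix n n ℂ)) *
    ((List.range halfL).map (fun l =>
      blockDiag2 Uᴴ 1 *
        ((Ry (θ (2 * l + 1)) * Rz (φ (2 * l + 1))) ⊗ₖ (1 : Matrix n n ℂ)) *
        blockDiag2 1 U *
        ((Ry (θ (2 * l + 2)) * Rz (φ (2 * l + 2))) ⊗ₖ (1 : Matrix n n ℂ)))).prod

/-- The quantum phase processing (QPP) circuit `V^L_{ω,θ,φ}(U)`: for even `L` it is the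
interleaved product of ancilla rotations and controlled-`U†`, controlled-`U`; for odd `L`
one extra layer `B(U†, I)·(R_y(θ_L) R_z(φ_L) ⊗ I)` is appended. -/
noncomputable def qpp {n : Type*} [Fintype n] [DecidableEq n]
    (U : Matrix n n ℂ) (L : ℕ) (ω : ℝ) (θ φ : ℕ → ℝ) :
    Matrix (Fin 2 × n) (Fin 2 × n) ℂ :=
  if L % 2 = 0 then qppEven U (L / 2) ω θ φ
  else qppEven U (L / 2) ω θ φ * blockDiag2 Uᴴ 1 *
    ((Ry (θ L) * Rz (φ L)) ⊗ₖ (1 : Matrix n n ℂ))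


noncomputable def vecEmb {N : ℕ} (χ : Fin N → ℂ) (a : Fin 2 → ℂ) : Fin 2 × Fin N → ℂ :=
  fun bi => a bi.1 * χ bi.2

lemma vecEmb_smul {N : ℕ} (χ : Fin N → ℂ) (c : ℂ) (a : Fin 2 → ℂ) :
    vecEmb χ (c • a) = c • vecEmb χ a := by
  funext bi; simp [vecEmb, mul_assoc]

lemma kron_one_mulVec {N : ℕ} (χ : Fin N → ℂ) (A : Matrix (Fin 2) (Fin 2) ℂ) (a : Fin 2 → ℂ) :
    (A ⊗ₖ (1 : Matrix (Fin N) (Fin N) ℂ)).mulVec (vecEmb χ a) = vecEmb χ (A.mulVec a) := by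
  funext bi
  simp [Matrix.mulVec, dotProduct, vecEmb, Fintype.sum_prod_type, Matrix.one_apply,
    mul_ite, ite_mul, Fin.sum_univ_two]
  ring

lemma blockDiag2_mulVec {N : ℕ} (X Y : Matrix (Fin N) (Fin N) ℂ) (χ : Fin N → ℂ)
    (α β : ℂ) (hX : X.mulVec χ = α • χ) (hY : Y.mulVec χ = β • χ) (a : Fin 2 → ℂ) :
    (blockDiag2 X Y).mulVec (vecEmb χ a) = vecEmb χ ![α * a 0, β * a 1] := by
  funext bi
  obtain ⟨b, i⟩ := bi
  have hX' := congrFun hX i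
  have hY' := congrFun hY i
  simp only [Matrix.mulVec, dotProduct, Pi.smul_apply, smul_eq_mul] at hX' hY'
  fin_cases b <;>
  · simp [blockDiag2, Matrix.mulVec, dotProduct, vecEmb, Fintype.sum_prod_type,
      Fin.sum_univ_two, Finset.sum_add_distrib]
    simp only [mul_left_comm _ (a _), ← Finset.mul_sum, hX', hY']
    ring

lemma exp_half_cancel (τ : ℝ) :
    Complex.exp (Complex.I * τ / 2) * Complex.exp (-(Complex.I * τ / 2)) = 1 := by
  rw [← Complex.exp_add, add_neg_cancel, Complex.exp_zero]

lemma exp_half_half (τ : ℝ) :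
    Complex.exp (Complex.I * τ / 2) * Complex.exp (Complex.I * τ / 2)
      = Complex.exp (Complex.I * τ) := by
  rw [← Complex.exp_add]; congr 1; ring

lemma exp_neg_half_half (τ : ℝ) :
    Complex.exp (-(Complex.I * τ / 2)) * Complex.exp (-(Complex.I * τ / 2))
      = Complex.exp (-(Complex.I * τ)) := by
  rw [← Complex.exp_add]; congr 1; ring

lemma ctrlU_vec (τ : ℝ) (a : Fin 2 → ℂ) :
    (![(1 : ℂ) * a 0, Complex.exp (Complex.I * τ) * a 1]) =
      Complex.exp (Complex.I * τ / 2) • (Rz τ).mulVec a := by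
  funext c
  fin_cases c
  · simp [Rz, Matrix.mulVec, dotProduct, Fin.sum_univ_two]
    rw [← mul_assoc, exp_half_cancel, one_mul]
  · simp [Rz, Matrix.mulVec, dotProduct, Fin.sum_univ_two]
    rw [← mul_assoc, exp_half_half]

lemma ctrlUdag_vec (τ : ℝ) (a : Fin 2 → ℂ) :
    (![Complex.exp (-(Complex.I * τ)) * a 0, (1 : ℂ) * a 1]) =
      Complex.exp (-(Complex.I * τ / 2)) • (Rz τ).mulVec a := by
  funext c
  fin_cases c
  · simp [Rz, Matrix.mulVec, dotProduct, Fin.sum_univ_two]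
    rw [← mul_assoc, exp_neg_half_half]
  · simp [Rz, Matrix.mulVec, dotProduct, Fin.sum_univ_two]
    rw [← mul_assoc, mul_comm (Complex.exp _) (Complex.exp _), exp_half_cancel, one_mul]

lemma ctrlU_mulVec {N : ℕ} (U : Matrix (Fin N) (Fin N) ℂ) (χ : Fin N → ℂ) (τ : ℝ)
    (heig : U.mulVec χ = Complex.exp (Complex.I * τ) • χ) (a : Fin 2 → ℂ) :
    (blockDiag2 1 U).mulVec (vecEmb χ a) =
      Complex.exp (Complex.I * τ / 2) • vecEmb χ ((Rz τ).mulVec a) := by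
  rw [blockDiag2_mulVec 1 U χ 1 (Complex.exp (Complex.I * τ)) (by simp) heig a,
    ctrlU_vec, vecEmb_smul]

lemma adj_eig {N : ℕ} (U : Matrix (Fin N) (Fin N) ℂ)
    (hU : U ∈ Matrix.unitaryGroup (Fin N) ℂ) (χ : Fin N → ℂ) (τ : ℝ)
    (heig : U.mulVec χ = Complex.exp (Complex.I * τ) • χ) :
    Uᴴ.mulVec χ = Complex.exp (-(Complex.I * τ)) • χ := by
  have h1 : Uᴴ * U = 1 := hU.1
  have h2 : Uᴴ.mulVec (U.mulVec χ) = χ := by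
    rw [Matrix.mulVec_mulVec, h1, Matrix.one_mulVec]
  rw [heig, Matrix.mulVec_smul] at h2
  have h3 : Complex.exp (-(Complex.I * τ)) • (Complex.exp (Complex.I * τ) • Uᴴ.mulVec χ)
      = Complex.exp (-(Complex.I * τ)) • χ := by rw [h2]
  rwa [smul_smul, ← Complex.exp_add, neg_add_cancel, Complex.exp_zero, one_smul] at h3

lemma ctrlUdag_mulVec {N : ℕ} (U : Matrix (Fin N) (Fin N) ℂ)
    (hU : U ∈ Matrix.unitaryGroup (Fin N) ℂ) (χ : Fin N → ℂ) (τ : ℝ)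
    (heig : U.mulVec χ = Complex.exp (Complex.I * τ) • χ) (a : Fin 2 → ℂ) :
    (blockDiag2 Uᴴ 1).mulVec (vecEmb χ a) =
      Complex.exp (-(Complex.I * τ / 2)) • vecEmb χ ((Rz τ).mulVec a) := by
  rw [blockDiag2_mulVec Uᴴ 1 χ (Complex.exp (-(Complex.I * τ))) 1
    (adj_eig U hU χ τ heig) (by simp) a, ctrlUdag_vec, vecEmb_smul]

lemma Wqsp_succ (L : ℕ) (ω : ℝ) (θ φ : ℕ → ℝ) (x : ℝ) :
    Wqsp (L + 1) ω θ φ x =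
      Wqsp L ω θ φ x * (Rz x * Ry (θ (L + 1)) * Rz (φ (L + 1))) := by
  simp [Wqsp, List.range_succ, mul_assoc]

lemma qppEven_mulVec {N : ℕ} (U : Matrix (Fin N) (Fin N) ℂ)
    (hU : U ∈ Matrix.unitaryGroup (Fin N) ℂ) (χ : Fin N → ℂ) (τ : ℝ)
    (heig : U.mulVec χ = Complex.exp (Complex.I * τ) • χ)
    (ω : ℝ) (θ φ : ℕ → ℝ) :
    ∀ (h : ℕ) (a : Fin 2 → ℂ),
      (qppEven U h ω θ φ).mulVec (vecEmb χ a) =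
        vecEmb χ ((Wqsp (2 * h) ω θ φ τ).mulVec a) := by
  intro h
  induction h with
  | zero =>
    intro a
    simp [qppEven, Wqsp, kron_one_mulVec]
  | succ h ih =>
    intro a
    have hq : qppEven U (h + 1) ω θ φ =
        qppEven U h ω θ φ *
          (blockDiag2 Uᴴ 1 *
            ((Ry (θ (2 * h + 1)) * Rz (φ (2 * h + 1))) ⊗ₖ (1 : Matrix (Fin N) (Fin N) ℂ)) *
            blockDiag2 1 U *
            ((Ry (θ (2 * h + 2)) * Rz (φ (2 * h + 2))) ⊗ₖ (1 : Matrix (Fin N) (Fin N) ℂ))) := by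
      simp [qppEven, List.range_succ, mul_assoc]
    rw [hq]
    rw [← Matrix.mulVec_mulVec]
    rw [← Matrix.mulVec_mulVec]
    rw [← Matrix.mulVec_mulVec]
    rw [← Matrix.mulVec_mulVec]
    rw [kron_one_mulVec]
    rw [ctrlU_mulVec U χ τ heig]
    rw [Matrix.mulVec_smul]
    rw [kron_one_mulVec]
    rw [Matrix.mulVec_smul]
    rw [ctrlUdag_mulVec U hU χ τ heig]
    rw [smul_smul, exp_half_cancel, one_smul, ih]
    rw [Matrix.mulVec_mulVec, Matrix.mulVec_mulVec, Matrix.mulVec_mulVec, Matrix.mulVec_mulVec]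
    have hW : Wqsp (2 * (h + 1)) ω θ φ τ =
        Wqsp (2 * h) ω θ φ τ * Rz τ * (Ry (θ (2 * h + 1)) * Rz (φ (2 * h + 1))) * Rz τ *
          (Ry (θ (2 * h + 2)) * Rz (φ (2 * h + 2))) := by
      rw [show 2 * (h + 1) = 2 * h + 1 + 1 from by ring, Wqsp_succ, Wqsp_succ,
        show 2 * h + 1 + 1 = 2 * h + 2 from rfl]
      simp only [mul_assoc]
    rw [hW]

lemma vecEmb_basis {N : ℕ} (χ : Fin N → ℂ) (M : Matrix (Fin 2) (Fin 2) ℂ) (b : Fin 2) :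
    vecEmb χ (M.mulVec (fun c => if c = b then 1 else 0)) =
      ∑ b' : Fin 2, M b' b •
        (fun bi : Fin 2 × Fin N => (if bi.1 = b' then 1 else 0) * χ bi.2) := by
  funext bi
  obtain ⟨c, i⟩ := bi
  simp only [vecEmb, Matrix.mulVec, dotProduct, Finset.sum_apply, Pi.smul_apply,
    smul_eq_mul, Fin.sum_univ_two]
  fin_cases c <;> fin_cases b <;> simp <;> ring

/-- eigenspace decomposition of QPP. On the two-dimensional subspace attached to
an eigenvector `χ` of `U` with eigenphase `τ`, the QPP circuit acts as
`(e^{-iτ/2})^{L mod 2} · W^L(τ)`. -/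
theorem stmt_5 (N : ℕ) (U : Matrix (Fin N) (Fin N) ℂ)
    (hU : U ∈ Matrix.unitaryGroup (Fin N) ℂ)
    (χ : Fin N → ℂ) (hχ : ∑ i, ‖χ i‖ ^ 2 = 1) (τ : ℝ)
    (heig : U.mulVec χ = Complex.exp (Complex.I * τ) • χ)
    (L : ℕ) (ω : ℝ) (θ φ : ℕ → ℝ) (b : Fin 2) :
    (qpp U L ω θ φ).mulVec
        (fun bi : Fin 2 × Fin N => (if bi.1 = b then 1 else 0) * χ bi.2) =
      Complex.exp (-(Complex.I * τ / 2)) ^ (L % 2) •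
        ∑ b' : Fin 2, Wqsp L ω θ φ τ b' b •
          (fun bi : Fin 2 × Fin N => (if bi.1 = b' then 1 else 0) * χ bi.2) := by
  have hin : (fun bi : Fin 2 × Fin N => (if bi.1 = b then 1 else 0) * χ bi.2) =
      vecEmb χ (fun c => if c = b then 1 else 0) := rfl
  rw [hin, ← vecEmb_basis]
  rcases Nat.even_or_odd L with hL | hL
  · have hmod : L % 2 = 0 := Nat.even_iff.mp hL
    have hdiv : 2 * (L / 2) = L := by omega
    rw [show qpp U L ω θ φ = qppEven U (L / 2) ω θ φ from by rw [qpp, if_pos hmod],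
      qppEven_mulVec U hU χ τ heig ω θ φ (L / 2), hdiv, hmod]
    simp
  · have hmod : L % 2 = 1 := Nat.odd_iff.mp hL
    have hdiv : L = 2 * (L / 2) + 1 := by omega
    rw [show qpp U L ω θ φ = qppEven U (L / 2) ω θ φ * blockDiag2 Uᴴ 1 *
        ((Ry (θ L) * Rz (φ L)) ⊗ₖ (1 : Matrix (Fin N) (Fin N) ℂ)) from by
      rw [qpp, if_neg (by omega)]]
    rw [← Matrix.mulVec_mulVec, ← Matrix.mulVec_mulVec, kron_one_mulVec,
      ctrlUdag_mulVec U hU χ τ heig, Matrix.mulVec_smul,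
      qppEven_mulVec U hU χ τ heig ω θ φ (L / 2), hmod, pow_one]
    congr 1
    rw [Matrix.mulVec_mulVec, Matrix.mulVec_mulVec]
    congr 2
    conv_rhs => rw [hdiv, Wqsp_succ, ← hdiv]
    simp only [mul_assoc]
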